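/- Let n ≥ 6 and let G be a connected simple graph on n vertices having a Laplacian eigenvalue of multiplicity n − 3. Then G contains no induced subgraph isomorphic to the cycle C₅ on five vertices. -/

import Mathlib

open Polynomial Matrix Finset

set_option maxHeartbeats 1000000
set_option synthInstance.maxHeartbeats 1000000

/-- The cycle `C₅` on five vertices `v₁, v₂, v₃, v₄, u`, with edges
`v₁v₂, v₂v₃, v₃v₄, uv₁, uv₄`. -/
def C5 : SimpleGraph (Fin 5) :=
  SimpleGraph.fromEdgeSet {s(0, 1), s(1, 2), s(2, 3), s(4, 0), s(4, 3)}

instance : DecidableRel C5.Adj := fun a b =>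
  decidable_of_iff
    (s(a, b) ∈ ({s(0, 1), s(1, 2), s(2, 3), s(4, 0), s(4, 3)} : Finset (Sym2 (Fin 5))) ∧ a ≠ b)
    (by rw [C5, SimpleGraph.fromEdgeSet_adj]; simp)



lemma my_charpoly_eq_prod {N : ℕ}
    {A : Matrix (Fin N) (Fin N) ℝ} (hA : A.IsHermitian) :
    A.charpoly = ∏ i, (X - C (hA.eigenvalues i)) := by
  have hU : (hA.eigenvectorUnitary : Matrix (Fin N) (Fin N) ℝ) *
      (star hA.eigenvectorUnitary : Matrix (Fin N) (Fin N) ℝ) = 1 :=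
    (Matrix.mem_unitaryGroup_iff).mp hA.eigenvectorUnitary.2
  set U : Matrix (Fin N) (Fin N) ℝ := (hA.eigenvectorUnitary : Matrix (Fin N) (Fin N) ℝ) with hUdef
  set D : Matrix (Fin N) (Fin N) ℝ := diagonal (RCLike.ofReal ∘ hA.eigenvalues) with hD
  have hspec : A = U * D * star U := hA.spectral_theorem
  have hmapmul : ∀ (P Q : Matrix (Fin N) (Fin N) ℝ),
      (P * Q).map Polynomial.C = P.map Polynomial.C * Q.map Polynomial.C :=
    fun P Q => Matrix.map_mul
  have hcm : charmatrix A = (U.map Polynomial.C) * (charmatrix D) * ((star U).map Polynomial.C) := by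
    rw [charmatrix, charmatrix, hspec]
    simp only [RingHom.mapMatrix_apply]
    rw [mul_sub, sub_mul, ← hmapmul, ← hmapmul]
    congr 1
    rw [Matrix.scalar_apply]
    simp only [← Matrix.smul_one_eq_diagonal]
    rw [mul_smul_comm, mul_one, smul_mul_assoc, ← hmapmul, hU]
    rw [show Matrix.map (1 : Matrix (Fin N) (Fin N) ℝ) ⇑C = 1 from Matrix.map_one _ (map_zero C) (map_one C)]
  have hdetC : (U.map Polynomial.C).det * ((star U).map Polynomial.C).det = 1 := by
    rw [← det_mul, ← hmapmul, hU]
    simp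
  have hAD : A.charpoly = D.charpoly := by
    rw [Matrix.charpoly, Matrix.charpoly, hcm, det_mul, det_mul]
    rw [mul_comm, ← mul_assoc, mul_comm (((star U).map Polynomial.C).det), hdetC, one_mul]
  have hDdiag : D = diagonal hA.eigenvalues := by rw [hD]; congr 1
  rw [hAD, hDdiag]
  rw [Matrix.charpoly_of_upperTriangular _ (Matrix.blockTriangular_diagonal _)]
  simp

lemma my_rootMult_prod {N : ℕ} (d : Fin N → ℝ) (α : ℝ) :
    (∏ i, (X - C (d i))).rootMultiplicity α =
      (Finset.univ.filter fun i => d i = α).card := by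
  classical
  rw [← Polynomial.count_roots]
  have h1 : (∏ i, (X - C (d i))) = ((Finset.univ.val.map d).map fun a => X - C a).prod := by
    rw [Multiset.map_map]
    rfl
  rw [h1, Polynomial.roots_multiset_prod_X_sub_C, Multiset.count_map]
  have h2 : Multiset.filter (fun a => α = d a) Finset.univ.val
      = Multiset.filter (fun i => d i = α) Finset.univ.val :=
    Multiset.filter_congr (fun x _ => eq_comm)
  rw [h2]
  rfl


lemma my_finrank_ker {N : ℕ} {A : Matrix (Fin N) (Fin N) ℝ} (hA : A.IsHermitian) (α : ℝ) :
    Module.finrank ℝ (LinearMap.ker (A - α • (1 : Matrix (Fin N) (Fin N) ℝ)).mulVecLin)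
      = (Finset.univ.filter fun i => hA.eigenvalues i = α).card := by
  classical
  have hU : (hA.eigenvectorUnitary : Matrix (Fin N) (Fin N) ℝ) *
      (star hA.eigenvectorUnitary : Matrix (Fin N) (Fin N) ℝ) = 1 :=
    (Matrix.mem_unitaryGroup_iff).mp hA.eigenvectorUnitary.2
  set U : Matrix (Fin N) (Fin N) ℝ := (hA.eigenvectorUnitary : Matrix (Fin N) (Fin N) ℝ) with hUdef
  have hdet : IsUnit U.det ∧ IsUnit (star U).det := by
    have := congrArg Matrix.det hU
    rw [det_mul, det_one] at this
    exact ⟨IsUnit.of_mul_eq_one _ this, IsUnit.of_mul_eq_one _ (by rw [mul_comm] at this; exact this)⟩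
  have hB : A - α • (1 : Matrix (Fin N) (Fin N) ℝ)
      = U * (diagonal (fun i => hA.eigenvalues i - α)) * star U := by
    have h1 : U * (α • (1 : Matrix (Fin N) (Fin N) ℝ)) * star U = α • (1 : Matrix (Fin N) (Fin N) ℝ) := by
      rw [mul_smul_comm, mul_one, smul_mul_assoc, hU]
    have h2 : diagonal (RCLike.ofReal ∘ hA.eigenvalues) = diagonal hA.eigenvalues := by congr 1
    conv_lhs => rw [hA.spectral_theorem, ← h1]
    show U * diagonal (RCLike.ofReal ∘ hA.eigenvalues) * star U - U * (α • (1 : Matrix (Fin N) (Fin N) ℝ)) * star U = _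
    rw [← sub_mul, ← mul_sub, h2, Matrix.smul_one_eq_diagonal, diagonal_sub]
  have hrank : (A - α • (1 : Matrix (Fin N) (Fin N) ℝ)).rank
      = Fintype.card {i // hA.eigenvalues i - α ≠ 0} := by
    rw [hB, rank_mul_eq_left_of_isUnit_det _ _ hdet.2, rank_mul_eq_right_of_isUnit_det _ _ hdet.1,
      rank_diagonal]
  have hrn := LinearMap.finrank_range_add_finrank_ker
    (A - α • (1 : Matrix (Fin N) (Fin N) ℝ)).mulVecLin
  have hfr : Module.finrank ℝ (Fin N → ℝ) = N := by simp
  rw [hfr] at hrn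
  have hcard1 : Fintype.card {i // hA.eigenvalues i - α ≠ 0}
      = (Finset.univ.filter fun i => ¬ (hA.eigenvalues i = α)).card := by
    rw [Fintype.card_subtype]
    congr 1
    apply Finset.filter_congr
    intro x _
    simp [sub_eq_zero]
  have hcard2 := Finset.card_filter_add_card_filter_not
    (s := (Finset.univ : Finset (Fin N))) (p := fun i => hA.eigenvalues i = α)
  rw [Finset.card_univ, Fintype.card_fin] at hcard2
  have : (A - α • (1 : Matrix (Fin N) (Fin N) ℝ)).rank
      = Module.finrank ℝ (LinearMap.range (A - α • (1 : Matrix (Fin N) (Fin N) ℝ)).mulVecLin) := rfl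
  omega

lemma my_algebra
    (a1 a2 a3 t0 t1 t2 t3 t4 p2 p3 p4 q2 q3 q4 r2 r3 r4 : ℝ)
    (ht0 : t0 = 0 ∨ t0 = 1) (ht1 : t1 = 0 ∨ t1 = 1) (ht2 : t2 = 0 ∨ t2 = 1)
    (ht3 : t3 = 0 ∨ t3 = 1) (ht4 : t4 = 0 ∨ t4 = 1)
    (hP1 : 0 = 1 + p2) (hP2 : a2 * p2 = p3) (hP3 : a3 * p3 = p2 + p4)
    (hPsum : 1 + p2 + p3 + p4 = 0)
    (hQ1 : a1 = q2) (hQ2 : a2 * q2 = 1 + q3) (hQ3 : a3 * q3 = q2 + q4)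
    (hQ0 : 0 = 1 + q4)
    (hQsum : 1 + q2 + q3 + q4 = 0)
    (hQw : 0 = t1 + t2 * q2 + t3 * q3 + t4 * q4)
    (hR1 : 0 = r2 + t1) (hR2 : a2 * r2 = r3 + t2) (hR3 : a3 * r3 = r2 + r4 + t3)
    (hR0 : 0 = r4 + t0)
    (hRsum : r2 + r3 + r4 + 1 = 0) : False := by
  have hp2 : p2 = -1 := by linarith
  subst hp2
  have hp3 : p3 = -a2 := by linear_combination -hP2
  subst hp3
  have hp4 : p4 = 1 - a3 * a2 := by linear_combination -hP3
  subst hp4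
  subst hQ1
  have hq3 : q3 = a2 * a1 - 1 := by linear_combination -hQ2
  subst hq3
  have hq4 : q4 = a3 * (a2 * a1 - 1) - a1 := by linear_combination -hQ3
  subst hq4
  have hr2 : r2 = -t1 := by linarith
  subst hr2
  have hr3 : r3 = a2 * (-t1) - t2 := by linear_combination -hR2
  subst hr3
  have hr4 : r4 = a3 * (a2 * (-t1) - t2) + t1 - t3 := by linear_combination -hR3
  subst hr4
  have h10 : 1 - a2 - a3 * a2 = 0 := by linear_combination hPsum
  have h11 : a2 * a1 + a3 * (a2 * a1) - a3 = 0 := by linear_combination hQsum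
  have e1 : a3 = a1 := by linear_combination -h11 - a1 * h10
  subst e1
  have h2 : 1 + a3 * (a2 * a3 - 1) - a3 = 0 := by linear_combination -hQ0
  have hstar : 1 - a3 - a2 * a3 = 0 := by linear_combination h2 + a3 * h10
  have e2 : a2 = a3 := by linear_combination hstar - h10
  subst e2
  have hc : a2 * a2 + a2 - 1 = 0 := by linear_combination -h10
  have h3' : a2 * t1 - a2 * t2 + t0 - t3 = 0 := by linear_combination -hR0 + t1 * hc
  have h8' : t1 + a2 * t2 - a2 * t3 - t4 = 0 := by
    linear_combination -hQw - t3 * hc - t4 * (a2 - 1) * hc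
  have h12' : t1 + t2 + a2 * t2 + t3 - 1 = 0 := by linear_combination -hRsum - t1 * hc
  rcases ht0 with rfl | rfl <;> rcases ht1 with rfl | rfl <;> rcases ht2 with rfl | rfl <;>
    rcases ht3 with rfl | rfl <;> rcases ht4 with rfl | rfl <;>
    (first
      | linarith [hc, h3', h8', h12']
      | nlinarith [hc, h3', h8', h12'])

/-- Let `n ≥ 6` and let `G` be a connected simple graph on `n` vertices having a
Laplacian eigenvalue of multiplicity `n − 3`. Then `G` contains no induced subgraph
isomorphic to the cycle `C₅` on five vertices. -/
theorem no_induced_C5_of_laplacian_multiplicity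
    (n : ℕ) (hn : 6 ≤ n)
    (G : SimpleGraph (Fin n)) [DecidableRel G.Adj] (hconn : G.Connected)
    (hmult : ∃ α : ℝ, ((G.lapMatrix ℝ).charpoly.rootMultiplicity α) = n - 3) :
    ¬ ∃ f : Fin 5 → Fin n, Function.Injective f ∧
        ∀ i j, G.Adj (f i) (f j) ↔ C5.Adj i j := by
  classical
  rintro ⟨f, hf, hadj⟩
  obtain ⟨α, hα⟩ := hmult
  set A : Matrix (Fin n) (Fin n) ℝ := G.lapMatrix ℝ with hAdef
  have hA : A.IsHermitian := (SimpleGraph.posSemidef_lapMatrix ℝ G).1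
  rw [my_charpoly_eq_prod hA, my_rootMult_prod] at hα
  -- α is not zero
  have hcard1 : Fintype.card G.ConnectedComponent = 1 := by
    rw [Fintype.card_eq_one_iff]
    obtain ⟨v⟩ := hconn.nonempty
    refine ⟨G.connectedComponentMk v, ?_⟩
    intro c
    refine SimpleGraph.ConnectedComponent.ind (fun u => ?_) c
    exact SimpleGraph.ConnectedComponent.sound (hconn.preconnected u v)
  have hα0 : α ≠ 0 := by
    intro h0
    subst h0
    have h1 := my_finrank_ker hA 0
    rw [hα] at h1
    have hzero : A - (0 : ℝ) • (1 : Matrix (Fin n) (Fin n) ℝ) = A := by simp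
    rw [hzero] at h1
    have h2 := G.card_connectedComponent_eq_finrank_ker_toLin'_lapMatrix
    rw [hcard1, Matrix.toLin'_apply'] at h2
    rw [← hAdef] at h2
    rw [← h2] at h1
    omega
  -- the eigenspace W
  set W : Submodule ℝ (Fin n → ℝ) :=
    LinearMap.ker (A - α • (1 : Matrix (Fin n) (Fin n) ℝ)).mulVecLin with hWdef
  have hWrank : Module.finrank ℝ W = n - 3 := by
    rw [hWdef, my_finrank_ker hA α, hα]
  have hWmem : ∀ x : Fin n → ℝ, x ∈ W ↔ A *ᵥ x = α • x := by
    intro x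
    rw [hWdef, LinearMap.mem_ker, Matrix.mulVecLin_apply, Matrix.sub_mulVec,
      Matrix.smul_mulVec, Matrix.one_mulVec, sub_eq_zero]
  -- an extra vertex w
  have hwex : ∃ w : Fin n, w ∉ Set.range f := by
    by_contra h
    push_neg at h
    have hsurj : Function.Surjective f := fun y => by
      have := h y
      simpa [Set.mem_range] using this
    have := Fintype.card_le_of_surjective f hsurj
    simp at this
    omega
  obtain ⟨w, hw⟩ := hwex
  have hne : ∀ i : Fin 5, f i ≠ w := fun i h => hw ⟨i, h⟩
  -- the six-element support set
  set S6 : Finset (Fin n) := {f 0, f 1, f 2, f 3, f 4, w} with hS6def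
  have hnm4 : f 4 ∉ ({w} : Finset (Fin n)) := by
    simp only [Finset.mem_singleton]; exact hne 4
  have hnm3 : f 3 ∉ ({f 4, w} : Finset (Fin n)) := by
    simp only [Finset.mem_insert, Finset.mem_singleton, hf.eq_iff]
    rintro (h | h)
    · exact absurd h (by decide)
    · exact hne 3 h
  have hnm2 : f 2 ∉ ({f 3, f 4, w} : Finset (Fin n)) := by
    simp only [Finset.mem_insert, Finset.mem_singleton, hf.eq_iff]
    rintro (h | h | h)
    · exact absurd h (by decide)
    · exact absurd h (by decide)
    · exact hne 2 h
  have hnm1 : f 1 ∉ ({f 2, f 3, f 4, w} : Finset (Fin n)) := by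
    simp only [Finset.mem_insert, Finset.mem_singleton, hf.eq_iff]
    rintro (h | h | h | h)
    · exact absurd h (by decide)
    · exact absurd h (by decide)
    · exact absurd h (by decide)
    · exact hne 1 h
  have hnm0 : f 0 ∉ ({f 1, f 2, f 3, f 4, w} : Finset (Fin n)) := by
    simp only [Finset.mem_insert, Finset.mem_singleton, hf.eq_iff]
    rintro (h | h | h | h | h)
    · exact absurd h (by decide)
    · exact absurd h (by decide)
    · exact absurd h (by decide)
    · exact absurd h (by decide)
    · exact hne 0 h
  have hS6card : S6.card = 6 := by
    rw [hS6def, Finset.card_insert_of_notMem hnm0, Finset.card_insert_of_notMem hnm1,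
      Finset.card_insert_of_notMem hnm2, Finset.card_insert_of_notMem hnm3,
      Finset.card_insert_of_notMem hnm4, Finset.card_singleton]
  have hS6sum : ∀ F : Fin n → ℝ,
      (∑ u ∈ S6, F u) = F (f 0) + F (f 1) + F (f 2) + F (f 3) + F (f 4) + F w := by
    intro F
    rw [hS6def]
    rw [Finset.sum_insert hnm0, Finset.sum_insert hnm1, Finset.sum_insert hnm2,
      Finset.sum_insert hnm3, Finset.sum_insert hnm4, Finset.sum_singleton]
    ring
  -- t i records adjacency of f i to w
  set t : Fin 5 → ℝ := fun i => if G.Adj (f i) w then 1 else 0 with htdef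
  have ht : ∀ i, t i = 0 ∨ t i = 1 := by
    intro i
    by_cases h : G.Adj (f i) w <;> simp [htdef, h]
  have htw : ∀ (i : Fin 5) (z : ℝ), (if G.Adj (f i) w then z else 0) = t i * z := by
    intro i z
    by_cases h : G.Adj (f i) w <;> simp [htdef, h]
  -- the key eigen-equation at the vertices f i
  have hkey : ∀ x : Fin n → ℝ, A *ᵥ x = α • x → (∀ v, v ∉ S6 → x v = 0) → ∀ i : Fin 5,
      ((G.degree (f i) : ℝ) - α) * x (f i)
        = (∑ j : Fin 5, if C5.Adj i j then x (f j) else 0) + t i * x w := by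
    intro x hx hx0 i
    have h1 := congrFun hx (f i)
    rw [hAdef] at h1
    rw [SimpleGraph.lapMatrix_mulVec_apply] at h1
    have h2 : ∑ u ∈ G.neighborFinset (f i), x u
        = ∑ u ∈ S6, (if G.Adj (f i) u then x u else 0) := by
      rw [SimpleGraph.neighborFinset_eq_filter, Finset.sum_filter]
      refine (Finset.sum_subset (Finset.subset_univ S6) ?_).symm
      intro u _ hu
      rw [hx0 u hu]
      simp
    rw [h2, hS6sum] at h1
    simp only [hadj, htw] at h1
    rw [Fin.sum_univ_five]
    have h3 : (α • x) (f i) = α * x (f i) := rfl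
    rw [h3] at h1
    have h4 : ¬ G.Adj (f i) w ∨ True := Or.inr trivial
    linarith [h1]
  -- the key eigen-equation at the vertex w
  have hkeyw : ∀ x : Fin n → ℝ, A *ᵥ x = α • x → (∀ v, v ∉ S6 → x v = 0) →
      ((G.degree w : ℝ) - α) * x w = ∑ i : Fin 5, t i * x (f i) := by
    intro x hx hx0
    have h1 := congrFun hx w
    rw [hAdef] at h1
    rw [SimpleGraph.lapMatrix_mulVec_apply] at h1
    have h2 : ∑ u ∈ G.neighborFinset w, x u
        = ∑ u ∈ S6, (if G.Adj w u then x u else 0) := by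
      rw [SimpleGraph.neighborFinset_eq_filter, Finset.sum_filter]
      refine (Finset.sum_subset (Finset.subset_univ S6) ?_).symm
      intro u _ hu
      rw [hx0 u hu]
      simp
    rw [h2, hS6sum] at h1
    have hcomm : ∀ i : Fin 5, (if G.Adj w (f i) then x (f i) else 0) = t i * x (f i) := by
      intro i
      by_cases h : G.Adj (f i) w
      · rw [if_pos (G.adj_symm h)]; simp [htdef, h]
      · rw [if_neg (fun h' => h (G.adj_symm h'))]; simp [htdef, h]
    rw [hcomm 0, hcomm 1, hcomm 2, hcomm 3, hcomm 4] at h1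
    rw [if_neg (G.irrefl)] at h1
    rw [Fin.sum_univ_five]
    have h3 : (α • x) w = α * x w := rfl
    rw [h3] at h1
    linarith [h1]
  -- sum of coordinates vanishes
  have hsum : ∀ x : Fin n → ℝ, A *ᵥ x = α • x → (∀ v, v ∉ S6 → x v = 0) →
      x (f 0) + x (f 1) + x (f 2) + x (f 3) + x (f 4) + x w = 0 := by
    intro x hx hx0
    have h1 : ∑ v : Fin n, (A *ᵥ x) v = 0 := by
      have hone : (fun _ : Fin n => (1 : ℝ)) ᵥ* A = 0 := by
        have hsymm : Aᵀ = A := G.isSymm_lapMatrix (R := ℝ)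
        rw [← hsymm, Matrix.vecMul_transpose]
        rw [hAdef]
        exact G.lapMatrix_mulVec_const_eq_zero
      calc ∑ v : Fin n, (A *ᵥ x) v = (fun _ : Fin n => (1 : ℝ)) ⬝ᵥ (A *ᵥ x) := by
            simp [dotProduct]
        _ = ((fun _ : Fin n => (1 : ℝ)) ᵥ* A) ⬝ᵥ x := by rw [Matrix.dotProduct_mulVec]
        _ = 0 := by rw [hone]; simp [dotProduct]
    rw [hx] at h1
    have h2 : α * ∑ v : Fin n, x v = 0 := by
      rw [Finset.mul_sum]
      simpa [Pi.smul_apply, smul_eq_mul] using h1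
    have h3 : ∑ v : Fin n, x v = 0 := by
      rcases mul_eq_zero.mp h2 with h | h
      · exact absurd h hα0
      · exact h
    have h4 : ∑ v : Fin n, x v = ∑ v ∈ S6, x v := by
      refine (Finset.sum_subset (Finset.subset_univ S6) ?_).symm
      intro u _ hu
      exact hx0 u hu
    rw [h4, hS6sum] at h3
    linarith [h3]
  -- the subspace of eigenvectors supported on S6
  set K : Submodule ℝ (Fin n → ℝ) :=
    LinearMap.ker (LinearMap.funLeft ℝ ℝ (fun v : {v : Fin n // v ∉ S6} => (v : Fin n)))
    with hKdef
  set Z : Submodule ℝ (Fin n → ℝ) := W ⊓ K with hZdef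
  have hKrank : 6 ≤ Module.finrank ℝ K := by
    have hrn := LinearMap.finrank_range_add_finrank_ker
      (LinearMap.funLeft ℝ ℝ (fun v : {v : Fin n // v ∉ S6} => (v : Fin n)))
    have h1 : Module.finrank ℝ
        (LinearMap.range (LinearMap.funLeft ℝ ℝ (fun v : {v : Fin n // v ∉ S6} => (v : Fin n))))
        ≤ Module.finrank ℝ ({v : Fin n // v ∉ S6} → ℝ) := Submodule.finrank_le _
    have h2 : Module.finrank ℝ ({v : Fin n // v ∉ S6} → ℝ)
        = Fintype.card {v : Fin n // v ∉ S6} := by simp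
    have h3 : Fintype.card {v : Fin n // v ∉ S6} = n - 6 := by
      rw [Fintype.card_subtype_compl, Fintype.card_coe, hS6card, Fintype.card_fin]
    have h4 : Module.finrank ℝ (Fin n → ℝ) = n := by simp
    rw [h4] at hrn
    rw [hKdef]
    omega
  have hZrank : 3 ≤ Module.finrank ℝ Z := by
    have hdim := Submodule.finrank_sup_add_finrank_inf_eq W K
    have h1 : Module.finrank ℝ ↥(W ⊔ K) ≤ Module.finrank ℝ (Fin n → ℝ) :=
      Submodule.finrank_le _
    have h2 : Module.finrank ℝ (Fin n → ℝ) = n := by simp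
    rw [h2] at h1
    have h5 : Module.finrank ℝ ↥(W ⊓ K) = Module.finrank ℝ Z := by rw [hZdef]
    omega
  -- evaluation at the three coordinates f 0, f 1, w
  set Psi : Z →ₗ[ℝ] (Fin 3 → ℝ) :=
    LinearMap.pi (fun j => (LinearMap.proj ((![f 0, f 1, w] : Fin 3 → Fin n) j)).comp
      Z.subtype) with hPsidef
  have hPsi0 : ∀ z : Z, Psi z 0 = (z : Fin n → ℝ) (f 0) := fun z => rfl
  have hPsi1 : ∀ z : Z, Psi z 1 = (z : Fin n → ℝ) (f 1) := fun z => rfl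
  have hPsi2 : ∀ z : Z, Psi z 2 = (z : Fin n → ℝ) w := fun z => rfl
  have hmemW : ∀ z : Z, A *ᵥ (z : Fin n → ℝ) = α • (z : Fin n → ℝ) :=
    fun z => (hWmem _).mp z.2.1
  have hzout : ∀ (z : Z) (v : Fin n), v ∉ S6 → (z : Fin n → ℝ) v = 0 := by
    intro z v hv
    have h1 : (z : Fin n → ℝ) ∈ K := z.2.2
    rw [hKdef, LinearMap.mem_ker] at h1
    exact congrFun h1 ⟨v, hv⟩
  -- row expansions of the eigen-equations
  have hr0 : ∀ x : Fin n → ℝ, A *ᵥ x = α • x → (∀ v, v ∉ S6 → x v = 0) →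
      ((G.degree (f 0) : ℝ) - α) * x (f 0) = x (f 1) + x (f 4) + t 0 * x w := by
    intro x hx hx0
    have hk := hkey x hx hx0 0
    rw [Fin.sum_univ_five, if_neg (by decide : ¬ C5.Adj 0 0), if_pos (by decide : C5.Adj 0 1),
      if_neg (by decide : ¬ C5.Adj 0 2), if_neg (by decide : ¬ C5.Adj 0 3),
      if_pos (by decide : C5.Adj 0 4)] at hk
    linarith [hk]
  have hr1 : ∀ x : Fin n → ℝ, A *ᵥ x = α • x → (∀ v, v ∉ S6 → x v = 0) →
      ((G.degree (f 1) : ℝ) - α) * x (f 1) = x (f 0) + x (f 2) + t 1 * x w := by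
    intro x hx hx0
    have hk := hkey x hx hx0 1
    rw [Fin.sum_univ_five, if_pos (by decide : C5.Adj 1 0), if_neg (by decide : ¬ C5.Adj 1 1),
      if_pos (by decide : C5.Adj 1 2), if_neg (by decide : ¬ C5.Adj 1 3),
      if_neg (by decide : ¬ C5.Adj 1 4)] at hk
    linarith [hk]
  have hr2 : ∀ x : Fin n → ℝ, A *ᵥ x = α • x → (∀ v, v ∉ S6 → x v = 0) →
      ((G.degree (f 2) : ℝ) - α) * x (f 2) = x (f 1) + x (f 3) + t 2 * x w := by
    intro x hx hx0
    have hk := hkey x hx hx0 2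
    rw [Fin.sum_univ_five, if_neg (by decide : ¬ C5.Adj 2 0), if_pos (by decide : C5.Adj 2 1),
      if_neg (by decide : ¬ C5.Adj 2 2), if_pos (by decide : C5.Adj 2 3),
      if_neg (by decide : ¬ C5.Adj 2 4)] at hk
    linarith [hk]
  have hr3 : ∀ x : Fin n → ℝ, A *ᵥ x = α • x → (∀ v, v ∉ S6 → x v = 0) →
      ((G.degree (f 3) : ℝ) - α) * x (f 3) = x (f 2) + x (f 4) + t 3 * x w := by
    intro x hx hx0
    have hk := hkey x hx hx0 3
    rw [Fin.sum_univ_five, if_neg (by decide : ¬ C5.Adj 3 0), if_neg (by decide : ¬ C5.Adj 3 1),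
      if_pos (by decide : C5.Adj 3 2), if_neg (by decide : ¬ C5.Adj 3 3),
      if_pos (by decide : C5.Adj 3 4)] at hk
    linarith [hk]
  have hr4 : ∀ x : Fin n → ℝ, A *ᵥ x = α • x → (∀ v, v ∉ S6 → x v = 0) →
      ((G.degree (f 4) : ℝ) - α) * x (f 4) = x (f 0) + x (f 3) + t 4 * x w := by
    intro x hx hx0
    have hk := hkey x hx hx0 4
    rw [Fin.sum_univ_five, if_pos (by decide : C5.Adj 4 0), if_neg (by decide : ¬ C5.Adj 4 1),
      if_neg (by decide : ¬ C5.Adj 4 2), if_pos (by decide : C5.Adj 4 3),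
      if_neg (by decide : ¬ C5.Adj 4 4)] at hk
    linarith [hk]
  -- Psi is injective
  have hker0 : ∀ z : Z, Psi z = 0 → z = 0 := by
    intro z hz
    have h0 : (z : Fin n → ℝ) (f 0) = 0 := by
      have := congrFun hz 0; rw [hPsi0] at this; simpa using this
    have h1 : (z : Fin n → ℝ) (f 1) = 0 := by
      have := congrFun hz 1; rw [hPsi1] at this; simpa using this
    have hww : (z : Fin n → ℝ) w = 0 := by
      have := congrFun hz 2; rw [hPsi2] at this; simpa using this
    have h2 : (z : Fin n → ℝ) (f 2) = 0 := by
      have hk := hr1 _ (hmemW z) (hzout z)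
      rw [h0, h1, hww] at hk
      linarith [hk]
    have h3 : (z : Fin n → ℝ) (f 3) = 0 := by
      have hk := hr2 _ (hmemW z) (hzout z)
      rw [h1, h2, hww] at hk
      linarith [hk]
    have h4 : (z : Fin n → ℝ) (f 4) = 0 := by
      have hk := hr3 _ (hmemW z) (hzout z)
      rw [h2, h3, hww] at hk
      linarith [hk]
    apply Subtype.ext
    funext v
    show (z : Fin n → ℝ) v = 0
    by_cases hv : v ∈ S6
    · rw [hS6def] at hv
      simp only [Finset.mem_insert, Finset.mem_singleton] at hv
      rcases hv with rfl | rfl | rfl | rfl | rfl | rfl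
      · exact h0
      · exact h1
      · exact h2
      · exact h3
      · exact h4
      · exact hww
    · exact hzout z v hv
  have hPsiinj : Function.Injective Psi := by
    intro z1 z2 h12
    have hz : z1 - z2 = 0 := by
      apply hker0
      rw [map_sub, h12, sub_self]
    exact sub_eq_zero.mp hz
  -- Psi is surjective
  have hPsisurj : Function.Surjective Psi := by
    have h1 : Module.finrank ℝ (LinearMap.range Psi) = Module.finrank ℝ Z :=
      LinearMap.finrank_range_of_inj hPsiinj
    have h2 : Module.finrank ℝ (Fin 3 → ℝ) = 3 := by simp
    have h4 : Module.finrank ℝ (LinearMap.range Psi) ≤ 3 := by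
      have := Submodule.finrank_le (LinearMap.range Psi)
      omega
    have h3 : LinearMap.range Psi = ⊤ := by
      apply Submodule.eq_top_of_finrank_eq
      rw [h2]
      omega
    exact LinearMap.range_eq_top.mp h3
  -- the three special eigenvectors
  obtain ⟨zP, hzP⟩ := hPsisurj ![1, 0, 0]
  obtain ⟨zQ, hzQ⟩ := hPsisurj ![0, 1, 0]
  obtain ⟨zR, hzR⟩ := hPsisurj ![0, 0, 1]
  set P : Fin n → ℝ := (zP : Fin n → ℝ) with hPdef
  set Q : Fin n → ℝ := (zQ : Fin n → ℝ) with hQdef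
  set R : Fin n → ℝ := (zR : Fin n → ℝ) with hRdef
  have hP0 : P (f 0) = 1 := by
    have := congrFun hzP 0; rw [hPsi0] at this; simpa [hPdef] using this
  have hP1 : P (f 1) = 0 := by
    have := congrFun hzP 1; rw [hPsi1] at this; simpa [hPdef] using this
  have hPw : P w = 0 := by
    have := congrFun hzP 2; rw [hPsi2] at this; simpa [hPdef] using this
  have hQ0 : Q (f 0) = 0 := by
    have := congrFun hzQ 0; rw [hPsi0] at this; simpa [hQdef] using this
  have hQ1 : Q (f 1) = 1 := by
    have := congrFun hzQ 1; rw [hPsi1] at this; simpa [hQdef] using this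
  have hQw : Q w = 0 := by
    have := congrFun hzQ 2; rw [hPsi2] at this; simpa [hQdef] using this
  have hR0 : R (f 0) = 0 := by
    have := congrFun hzR 0; rw [hPsi0] at this; simpa [hRdef] using this
  have hR1 : R (f 1) = 0 := by
    have := congrFun hzR 1; rw [hPsi1] at this; simpa [hRdef] using this
  have hRw : R w = 1 := by
    have := congrFun hzR 2; rw [hPsi2] at this; simpa [hRdef] using this
  have hPx : A *ᵥ P = α • P := hmemW zP
  have hQx : A *ᵥ Q = α • Q := hmemW zQ
  have hRx : A *ᵥ R = α • R := hmemW zR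
  have hPo : ∀ v, v ∉ S6 → P v = 0 := hzout zP
  have hQo : ∀ v, v ∉ S6 → Q v = 0 := hzout zQ
  have hRo : ∀ v, v ∉ S6 → R v = 0 := hzout zR
  -- final contradiction via the polynomial identities
  refine my_algebra ((G.degree (f 1) : ℝ) - α) ((G.degree (f 2) : ℝ) - α)
    ((G.degree (f 3) : ℝ) - α) (t 0) (t 1) (t 2) (t 3) (t 4)
    (P (f 2)) (P (f 3)) (P (f 4)) (Q (f 2)) (Q (f 3)) (Q (f 4))
    (R (f 2)) (R (f 3)) (R (f 4))
    (ht 0) (ht 1) (ht 2) (ht 3) (ht 4) ?_ ?_ ?_ ?_ ?_ ?_ ?_ ?_ ?_ ?_ ?_ ?_ ?_ ?_ ?_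
  · have hk := hr1 P hPx hPo; rw [hP0, hP1, hPw] at hk; linarith [hk]
  · have hk := hr2 P hPx hPo; rw [hP1, hPw] at hk; linarith [hk]
  · have hk := hr3 P hPx hPo; rw [hPw] at hk; linarith [hk]
  · have hk := hsum P hPx hPo; rw [hP0, hP1, hPw] at hk; linarith [hk]
  · have hk := hr1 Q hQx hQo; rw [hQ0, hQ1, hQw] at hk; linarith [hk]
  · have hk := hr2 Q hQx hQo; rw [hQ1, hQw] at hk; linarith [hk]
  · have hk := hr3 Q hQx hQo; rw [hQw] at hk; linarith [hk]
  · have hk := hr0 Q hQx hQo; rw [hQ0, hQ1, hQw] at hk; linarith [hk]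
  · have hk := hsum Q hQx hQo; rw [hQ0, hQ1, hQw] at hk; linarith [hk]
  · have hk := hkeyw Q hQx hQo
    rw [Fin.sum_univ_five, hQ0, hQ1, hQw] at hk
    linarith [hk]
  · have hk := hr1 R hRx hRo; rw [hR0, hR1, hRw] at hk; linarith [hk]
  · have hk := hr2 R hRx hRo; rw [hR1, hRw] at hk; linarith [hk]
  · have hk := hr3 R hRx hRo; rw [hRw] at hk; linarith [hk]
  · have hk := hr0 R hRx hRo; rw [hR0, hR1, hRw] at hk; linarith [hk]
  · have hk := hsum R hRx hRo; rw [hR0, hR1, hRw] at hk; linarith [hk]
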